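/- arXiv:1809.10130 — 5 statements merged into one kernel-verified Lean document; each statement's English description precedes it below -/
import Mathlib

section
/- Let ζ be a complex number with |ζ| > 1, let z = (ζ + ζ⁻¹)/2, and let n be a nonnegative integer. Then ∫₀^π cos(nθ)/(z − cos θ) dθ = 2π / (ζⁿ(ζ − ζ⁻¹)). -/
open Complex intervalIntegral Metric


lemma factor_eq (ζ : ℂ) (hζ : 1 < ‖ζ‖) (z : ℂ) (hz : z = (ζ + ζ⁻¹) / 2) (θ : ℝ) :
    z - (Real.cos θ : ℂ) =
      -((Complex.exp (θ * I) - ζ) * (Complex.exp (θ * I) - ζ⁻¹)) / (2 * Complex.exp (θ * I)) := by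
  have hζ0 : ζ ≠ 0 := by
    intro h; rw [h] at hζ; simp at hζ; linarith
  have hw : Complex.exp (θ * I) ≠ 0 := Complex.exp_ne_zero _
  rw [Complex.ofReal_cos, Complex.cos, hz]
  rw [show -(θ:ℂ) * I = -(θ * I) by ring, Complex.exp_neg]
  field_simp
  ring

lemma denom_ne (ζ : ℂ) (hζ : 1 < ‖ζ‖) (z : ℂ) (hz : z = (ζ + ζ⁻¹) / 2) (θ : ℝ) :
    z - (Real.cos θ : ℂ) ≠ 0 := by
  have hζ0 : ζ ≠ 0 := by intro h; rw [h] at hζ; simp at hζ; linarith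
  have habs : ‖Complex.exp (θ * I)‖ = 1 := by
    simpa using Complex.norm_exp_ofReal_mul_I θ
  have h1 : Complex.exp (θ * I) - ζ ≠ 0 := by
    intro h
    have := sub_eq_zero.1 h
    rw [this] at habs; rw [habs] at hζ; linarith
  have h2 : Complex.exp (θ * I) - ζ⁻¹ ≠ 0 := by
    intro h
    have := sub_eq_zero.1 h
    have : ‖ζ⁻¹‖ < 1 := by
      rw [norm_inv]; exact inv_lt_one_of_one_lt₀ hζ
    rw [sub_eq_zero.1 h] at habs
    rw [habs] at this; linarith
  rw [factor_eq ζ hζ z hz θ]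
  have hw : Complex.exp (θ * I) ≠ 0 := Complex.exp_ne_zero _
  field_simp
  refine neg_ne_zero.mpr (div_ne_zero (mul_ne_zero h1 ?_) (by simp [hw, hζ0]))
  intro h
  exact h2 (by field_simp; linear_combination h)


lemma circ_zero (ζ : ℂ) (hζ : 1 < ‖ζ‖) :
    (∮ w in C(0, 1), (w - ζ)⁻¹) = 0 := by
  have h : ∀ w ∈ closedBall (0:ℂ) 1, w - ζ ≠ 0 := by
    intro w hw
    rw [mem_closedBall_zero_iff] at hw
    intro h
    have := sub_eq_zero.1 h
    rw [← this] at hζ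
    linarith
  refine circleIntegral_eq_zero_of_differentiable_on_off_countable zero_le_one
    Set.countable_empty (ContinuousOn.inv₀ (continuousOn_id.sub continuousOn_const) h) ?_
  intro w hw
  exact ((differentiableAt_id.sub_const ζ).inv
    (h w (ball_subset_closedBall hw.1)))

lemma circ_two_pi (ζ : ℂ) (hζ : 1 < ‖ζ‖) :
    (∮ w in C(0, 1), (w - ζ⁻¹)⁻¹) = 2 * Real.pi * I := by
  refine circleIntegral.integral_sub_inv_of_mem_ball ?_
  rw [mem_ball_zero_iff, norm_inv]
  exact inv_lt_one_of_one_lt₀ hζ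



lemma full_circle (ζ : ℂ) (hζ : 1 < ‖ζ‖) (z : ℂ) (hz : z = (ζ + ζ⁻¹) / 2) :
    ∫ θ in (0:ℝ)..(2 * Real.pi), 1 / (z - (Real.cos θ : ℂ)) =
      4 * Real.pi / (ζ - ζ⁻¹) := by
  have hζ0 : ζ ≠ 0 := by intro h; rw [h] at hζ; simp at hζ; linarith
  have hinv : ‖ζ⁻¹‖ < 1 := by rw [norm_inv]; exact inv_lt_one_of_one_lt₀ hζ
  have hd : ζ - ζ⁻¹ ≠ 0 := by
    intro h
    have := sub_eq_zero.1 h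
    rw [← this] at hinv; linarith
  set f : ℂ → ℂ := fun w => (2 * I / (ζ - ζ⁻¹)) • ((w - ζ)⁻¹ - (w - ζ⁻¹)⁻¹) with hf
  have hint1 : CircleIntegrable (fun w => (w - ζ)⁻¹) 0 1 := by
    rw [circleIntegrable_sub_inv_iff]
    right
    rw [mem_sphere_zero_iff_norm]
    intro h; rw [show |(1:ℝ)| = 1 by norm_num] at h; rw [h] at hζ; linarith
  have hint2 : CircleIntegrable (fun w => (w - ζ⁻¹)⁻¹) 0 1 := by
    rw [circleIntegrable_sub_inv_iff]
    right
    rw [mem_sphere_zero_iff_norm]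
    intro h; rw [show |(1:ℝ)| = 1 by norm_num] at h; rw [h] at hinv; linarith
  have step1 : (∮ w in C(0, 1), f w) = ∫ θ in (0:ℝ)..(2 * Real.pi), 1 / (z - (Real.cos θ : ℂ)) := by
    rw [circleIntegral]
    refine intervalIntegral.integral_congr fun θ _ => ?_
    have habs : ‖Complex.exp (θ * I)‖ = 1 := by
      simpa using Complex.norm_exp_ofReal_mul_I θ
    have h1 : Complex.exp (θ * I) - ζ ≠ 0 := by
      intro h; rw [sub_eq_zero.1 h] at habs; rw [habs] at hζ; linarith
    have h2 : Complex.exp (θ * I) - ζ⁻¹ ≠ 0 := by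
      intro h; rw [sub_eq_zero.1 h] at habs; rw [habs] at hinv; linarith
    have hw : Complex.exp (θ * I) ≠ 0 := Complex.exp_ne_zero _
    have hsq : ζ ^ 2 - 1 ≠ 0 := fun h => hd (by field_simp; linear_combination h)
    have hq : Complex.exp (θ * I) * ζ - 1 ≠ 0 :=
      fun h => h2 (by field_simp; linear_combination h)
    rw [deriv_circleMap, factor_eq ζ hζ z hz θ]
    simp only [hf, circleMap, Complex.ofReal_one, one_mul, zero_add, smul_eq_mul]
    rw [inv_sub_inv h1 h2,
      show (Complex.exp (θ * I) - ζ⁻¹) - (Complex.exp (θ * I) - ζ) = ζ - ζ⁻¹ by ring]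
    have hP : (Complex.exp (θ * I) - ζ) * (Complex.exp (θ * I) - ζ⁻¹) ≠ 0 := mul_ne_zero h1 h2
    rw [div_mul_div_comm, mul_comm (2 * I) (ζ - ζ⁻¹),
      mul_div_mul_left _ _ hd, one_div, inv_div, div_neg, mul_div_assoc', ← neg_div,
      div_eq_div_iff hP hP]
    linear_combination (2 * Complex.exp (θ * I) *
      ((Complex.exp (θ * I) - ζ) * (Complex.exp (θ * I) - ζ⁻¹))) * Complex.I_sq
  have step2 : (∮ w in C(0, 1), f w) = 4 * Real.pi / (ζ - ζ⁻¹) := by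
    rw [hf]
    rw [circleIntegral.integral_smul]
    rw [circleIntegral.integral_sub hint1 hint2, circ_zero ζ hζ, circ_two_pi ζ hζ]
    rw [smul_eq_mul]
    field_simp
    ring_nf
    simp [Complex.I_sq]
  rw [← step1, step2]



lemma half_circle (ζ : ℂ) (hζ : 1 < ‖ζ‖) (z : ℂ) (hz : z = (ζ + ζ⁻¹) / 2) :
    ∫ θ in (0:ℝ)..Real.pi, 1 / (z - (Real.cos θ : ℂ)) = 2 * Real.pi / (ζ - ζ⁻¹) := by
  have hc : Continuous fun θ : ℝ => 1 / (z - (Real.cos θ : ℂ)) :=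
    continuous_const.div
      (continuous_const.sub (Complex.continuous_ofReal.comp Real.continuous_cos))
      (denom_ne ζ hζ z hz)
  have hsplit : (∫ θ in (0:ℝ)..Real.pi, 1 / (z - (Real.cos θ : ℂ)))
      + ∫ θ in Real.pi..(2 * Real.pi), 1 / (z - (Real.cos θ : ℂ))
      = ∫ θ in (0:ℝ)..(2 * Real.pi), 1 / (z - (Real.cos θ : ℂ)) :=
    intervalIntegral.integral_add_adjacent_intervals
      (hc.intervalIntegrable _ _) (hc.intervalIntegrable _ _)
  have hsym : (∫ θ in Real.pi..(2 * Real.pi), 1 / (z - (Real.cos θ : ℂ)))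
      = ∫ θ in (0:ℝ)..Real.pi, 1 / (z - (Real.cos θ : ℂ)) := by
    have h := intervalIntegral.integral_comp_sub_left (a := (0:ℝ)) (b := Real.pi)
      (fun x => 1 / (z - (Real.cos x : ℂ))) (2 * Real.pi)
    rw [show 2 * Real.pi - Real.pi = Real.pi by ring, show 2 * Real.pi - 0 = 2 * Real.pi by ring]
      at h
    rw [← h]
    refine intervalIntegral.integral_congr fun θ _ => ?_
    have : Real.cos (2 * Real.pi - θ) = Real.cos θ := by
      rw [Real.cos_sub]
      simp [Real.cos_two_pi, Real.sin_two_pi]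
    rw [this]
  rw [hsym] at hsplit
  have := full_circle ζ hζ z hz
  rw [← hsplit] at this
  have h2 : (2:ℂ) ≠ 0 := two_ne_zero
  have : (2:ℂ) * ∫ θ in (0:ℝ)..Real.pi, 1 / (z - (Real.cos θ : ℂ)) = 4 * Real.pi / (ζ - ζ⁻¹) := by
    rw [← this]; ring
  refine mul_left_cancel₀ h2 (this.trans ?_)
  rw [mul_div_assoc]
  ring



theorem stmt_4 (ζ : ℂ) (hζ : 1 < ‖ζ‖) (n : ℕ)
    (z : ℂ) (hz : z = (ζ + ζ⁻¹) / 2) :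
    ∫ θ in (0:ℝ)..Real.pi, (Real.cos (n * θ) : ℂ) / (z - (Real.cos θ : ℂ)) =
      2 * Real.pi / (ζ ^ n * (ζ - ζ⁻¹)) := by
  have hζ0 : ζ ≠ 0 := by intro h; rw [h] at hζ; simp at hζ; linarith
  have hinv : ‖ζ⁻¹‖ < 1 := by rw [norm_inv]; exact inv_lt_one_of_one_lt₀ hζ
  have hd : ζ - ζ⁻¹ ≠ 0 := by
    intro h; rw [← sub_eq_zero.1 h] at hinv; linarith
  have hsq : ζ ^ 2 - 1 ≠ 0 := fun h => hd (by field_simp; linear_combination h)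
  have hdd : ζ - ζ⁻¹ = (ζ ^ 2 - 1) / ζ := by field_simp
  have hD := denom_ne ζ hζ z hz
  have hcosc : ∀ c : ℝ, Continuous fun θ : ℝ => ((Real.cos (c * θ) : ℝ) : ℂ) := fun c =>
    Complex.continuous_ofReal.comp (Real.continuous_cos.comp (continuous_const.mul continuous_id))
  have hcont : ∀ c : ℝ, Continuous fun θ : ℝ => (Real.cos (c * θ) : ℂ) / (z - (Real.cos θ : ℂ)) :=
    fun c => (hcosc c).div
      (continuous_const.sub (Complex.continuous_ofReal.comp Real.continuous_cos)) hD
  have hintg : ∀ c : ℝ, IntervalIntegrable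
      (fun θ : ℝ => (Real.cos (c * θ) : ℂ) / (z - (Real.cos θ : ℂ)))
      MeasureTheory.volume 0 Real.pi := fun c => (hcont c).intervalIntegrable _ _
  have hvan : ∀ k : ℕ,
      (∫ θ in (0:ℝ)..Real.pi, ((Real.cos (((k + 1 : ℕ) : ℝ) * θ) : ℝ) : ℂ)) = 0 := by
    intro k
    rw [intervalIntegral.integral_ofReal]
    have hk : ((k + 1 : ℕ) : ℝ) ≠ 0 := by positivity
    have h2 := intervalIntegral.integral_comp_mul_left (a := (0:ℝ)) (b := Real.pi)
      (fun x => Real.cos x) hk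
    rw [h2, mul_zero, integral_cos, Real.sin_zero, Real.sin_nat_mul_pi]
    simp
  suffices H : ∀ m : ℕ,
      (∫ θ in (0:ℝ)..Real.pi, (Real.cos (m * θ) : ℂ) / (z - (Real.cos θ : ℂ)) =
        2 * Real.pi / (ζ ^ m * (ζ - ζ⁻¹))) ∧
      (∫ θ in (0:ℝ)..Real.pi, (Real.cos (((m + 1 : ℕ) : ℝ) * θ) : ℂ) / (z - (Real.cos θ : ℂ)) =
        2 * Real.pi / (ζ ^ (m + 1) * (ζ - ζ⁻¹))) from (H n).1
  have base0 : ∫ θ in (0:ℝ)..Real.pi,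
      (Real.cos (((0 : ℕ) : ℝ) * θ) : ℂ) / (z - (Real.cos θ : ℂ)) =
      2 * Real.pi / (ζ ^ (0:ℕ) * (ζ - ζ⁻¹)) := by
    simp only [Nat.cast_zero, zero_mul, Real.cos_zero, Complex.ofReal_one, pow_zero, one_mul]
    have h := half_circle ζ hζ z hz
    simpa [one_div] using h
  have base1 : ∫ θ in (0:ℝ)..Real.pi,
      (Real.cos (((0 + 1 : ℕ) : ℝ) * θ) : ℂ) / (z - (Real.cos θ : ℂ)) =
      2 * Real.pi / (ζ ^ (0 + 1 : ℕ) * (ζ - ζ⁻¹)) := by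
    have congr1 : ∫ θ in (0:ℝ)..Real.pi,
        (Real.cos (((0 + 1 : ℕ) : ℝ) * θ) : ℂ) / (z - (Real.cos θ : ℂ)) =
        ∫ θ in (0:ℝ)..Real.pi, (z * (1 / (z - (Real.cos θ : ℂ))) - 1) := by
      refine intervalIntegral.integral_congr fun θ _ => ?_
      simp only [Nat.cast_one, Nat.cast_ofNat, zero_add, one_mul]
      have hmul := mul_inv_cancel₀ (hD θ)
      rw [one_div, div_eq_mul_inv]
      linear_combination (-1 : ℂ) * hmul
    rw [congr1, intervalIntegral.integral_sub]
    · rw [intervalIntegral.integral_const_mul, half_circle ζ hζ z hz,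
        intervalIntegral.integral_const]
      simp only [sub_zero, real_smul, Complex.ofReal_one, mul_one, pow_one]
      rw [hz, hdd]
      field_simp
      ring
    · exact (continuous_const.mul (continuous_const.div
        (continuous_const.sub (Complex.continuous_ofReal.comp Real.continuous_cos)) hD :
          Continuous fun θ : ℝ => 1 / (z - (Real.cos θ : ℂ)))).intervalIntegrable _ _
    · exact intervalIntegrable_const
  intro m
  induction m with
  | zero => exact ⟨by simpa using base0, base1⟩
  | succ k ih =>
    refine ⟨ih.2, ?_⟩
    have trig : ∀ θ : ℝ, Real.cos (((k + 1 + 1 : ℕ) : ℝ) * θ) =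
        2 * Real.cos θ * Real.cos (((k + 1 : ℕ) : ℝ) * θ) - Real.cos (((k : ℕ) : ℝ) * θ) := by
      intro θ
      push_cast
      rw [show ((k:ℝ) + 1 + 1) * θ = ((k:ℝ) + 1) * θ + θ by ring,
        show (k:ℝ) * θ = ((k:ℝ) + 1) * θ - θ by ring, Real.cos_add, Real.cos_sub]
      ring
    have congr2 : ∫ θ in (0:ℝ)..Real.pi,
        (Real.cos (((k + 1 + 1 : ℕ) : ℝ) * θ) : ℂ) / (z - (Real.cos θ : ℂ))
        = ∫ θ in (0:ℝ)..Real.pi,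
          (2 * z * ((Real.cos (((k + 1 : ℕ) : ℝ) * θ) : ℂ) / (z - (Real.cos θ : ℂ)))
            - 2 * ((Real.cos (((k + 1 : ℕ) : ℝ) * θ) : ℝ) : ℂ)
            - (Real.cos (((k : ℕ) : ℝ) * θ) : ℂ) / (z - (Real.cos θ : ℂ))) := by
      refine intervalIntegral.integral_congr fun θ _ => ?_
      rw [trig θ]
      simp only [Complex.ofReal_sub, Complex.ofReal_mul, Complex.ofReal_ofNat]
      have hmul := mul_inv_cancel₀ (hD θ)
      rw [div_eq_mul_inv, div_eq_mul_inv, div_eq_mul_inv]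
      linear_combination (-2 * ((Real.cos (((k + 1 : ℕ) : ℝ) * θ) : ℝ) : ℂ)) * hmul
    rw [show ((k + 1 : ℕ) + 1 : ℕ) = (k + 1 + 1 : ℕ) by ring] at *
    rw [congr2]
    rw [intervalIntegral.integral_sub, intervalIntegral.integral_sub,
      intervalIntegral.integral_const_mul, intervalIntegral.integral_const_mul]
    · have h1 : ζ ^ (k + 1) * (ζ - ζ⁻¹) = ζ ^ k * (ζ - ζ⁻¹) * ζ := by ring
      have h2 : ζ ^ (k + 1 + 1) * (ζ - ζ⁻¹) = ζ ^ k * (ζ - ζ⁻¹) * ζ * ζ := by ring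
      obtain ⟨Q, hQdef⟩ : ∃ Q, ζ ^ k * (ζ - ζ⁻¹) = Q := ⟨_, rfl⟩
      have hQ : Q ≠ 0 := hQdef ▸ mul_ne_zero (pow_ne_zero _ hζ0) hd
      rw [ih.2, ih.1, hvan k, hz, h1, h2, hQdef]
      field_simp
      ring
    · exact ((continuous_const.mul (hcont _)).intervalIntegrable _ _)
    · exact ((continuous_const.mul (hcosc _)).intervalIntegrable _ _)
    · exact ((continuous_const.mul (hcont _)).sub
        (continuous_const.mul (hcosc _))).intervalIntegrable _ _
    · exact hintg _
end

section
/- Let n > 1 be an integer, ρ > 1 real, and a = (ρ^{2n} + ρ^{−2n})/2. Then ∫₀^π cos(2θ)/(a + cos(2nθ)) dθ = 0. -/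
open Finset intervalIntegral

lemma sum_cos_aux (n : ℕ) (hn : 1 < n) (x : ℝ) :
    ∑ k ∈ Finset.range n, Real.cos (x + 2 * Real.pi * k / n) = 0 := by
  have hn0 : (n : ℂ) ≠ 0 := Nat.cast_ne_zero.2 (by omega)
  set z : ℂ := Complex.exp (2 * Real.pi * Complex.I / n) with hz
  have h2pi : (2 * Real.pi * Complex.I : ℂ) ≠ 0 := by
    simp [Real.pi_ne_zero, Complex.I_ne_zero]
  have hz1 : z ≠ 1 := by
    rw [hz, Ne, Complex.exp_eq_one_iff]
    rintro ⟨m, hm⟩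
    have hmn : ((m : ℂ) * n - 1) * (2 * Real.pi * Complex.I) = 0 := by
      field_simp at hm
      linear_combination (-(2 * Real.pi * Complex.I)) * hm
    have h1 : (m : ℂ) * n = 1 := by
      have := (mul_eq_zero.1 hmn).resolve_right h2pi
      linear_combination this
    have h2 : (m : ℤ) * n = 1 := by exact_mod_cast h1
    have hdvd : (n : ℤ) ∣ 1 := ⟨m, by rw [← h2, mul_comm]⟩
    have := Int.le_of_dvd one_pos hdvd
    omega
  have hzn : z ^ n = 1 := by
    rw [hz, ← Complex.exp_nat_mul]
    have : (n : ℂ) * (2 * Real.pi * Complex.I / n) = 2 * Real.pi * Complex.I := by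
      field_simp
    rw [this, Complex.exp_two_pi_mul_I]
  have hsum : ∑ k ∈ Finset.range n, z ^ k = 0 := by
    rw [geom_sum_eq hz1, hzn]
    simp
  have hterm : ∀ k : ℕ, Real.cos (x + 2 * Real.pi * k / n)
      = (Complex.exp ((x : ℂ) * Complex.I) * z ^ k).re := by
    intro k
    rw [hz, ← Complex.exp_nat_mul, ← Complex.exp_add]
    have : (x : ℂ) * Complex.I + k * (2 * Real.pi * Complex.I / n)
        = ((x + 2 * Real.pi * k / n : ℝ) : ℂ) * Complex.I := by
      push_cast
      field_simp
    rw [this, Complex.exp_ofReal_mul_I_re]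
  calc ∑ k ∈ Finset.range n, Real.cos (x + 2 * Real.pi * k / n)
      = ∑ k ∈ Finset.range n, (Complex.exp ((x : ℂ) * Complex.I) * z ^ k).re := by
        exact Finset.sum_congr rfl fun k _ => hterm k
    _ = (Complex.exp ((x : ℂ) * Complex.I) * ∑ k ∈ Finset.range n, z ^ k).re := by
        rw [Finset.mul_sum, Complex.re_sum]
    _ = 0 := by rw [hsum, mul_zero, Complex.zero_re]

theorem stmt_9 (n : ℕ) (hn : 1 < n) (ρ : ℝ) (hρ : 1 < ρ)
    (a : ℝ) (ha : a = (ρ ^ (2 * n) + ρ ^ (-(2 * n : ℤ))) / 2) :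
    ∫ θ in (0:ℝ)..Real.pi, Real.cos (2 * θ) / (a + Real.cos (2 * n * θ)) = 0 := by
  have hπ := Real.pi_pos
  have hn0 : (n : ℝ) ≠ 0 := Nat.cast_ne_zero.2 (by omega)
  have hx : 1 < ρ ^ (2 * n) := one_lt_pow₀ hρ (by omega)
  have hxpos : 0 < ρ ^ (2 * n) := by linarith
  have ha1 : 1 < a := by
    have hneg : ρ ^ (-(2 * n : ℤ)) = (ρ ^ (2 * n))⁻¹ := by
      rw [zpow_neg]
      norm_cast
    rw [ha, hneg]
    have hinv : (ρ ^ (2 * n))⁻¹ * (ρ ^ (2 * n)) = 1 := inv_mul_cancel₀ (ne_of_gt hxpos)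
    nlinarith [sq_nonneg (ρ ^ (2 * n) - 1), inv_pos.2 hxpos]
  have hden : ∀ y : ℝ, 0 < a + Real.cos y := fun y => by
    nlinarith [Real.neg_one_le_cos y]
  set f : ℝ → ℝ := fun θ => Real.cos (2 * θ) / (a + Real.cos (2 * n * θ)) with hfdef
  have hf : Continuous f := by
    apply Continuous.div
    · exact (Real.continuous_cos.comp (continuous_const.mul continuous_id))
    · exact continuous_const.add (Real.continuous_cos.comp
        ((continuous_const.mul continuous_id)))
    · exact fun y => (hden _).ne'
  have hint : ∀ b c : ℝ, IntervalIntegrable f MeasureTheory.volume b c :=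
    fun b c => hf.intervalIntegrable b c
  have key := intervalIntegral.sum_integral_adjacent_intervals
    (a := fun k : ℕ => (k : ℝ) * Real.pi / n) (μ := MeasureTheory.volume) (f := f)
    (n := n) (fun k _ => hint _ _)
  have h0 : ((0 : ℕ) : ℝ) * Real.pi / n = 0 := by simp
  have hend : ((n : ℕ) : ℝ) * Real.pi / n = Real.pi := by field_simp
  rw [Nat.cast_zero, zero_mul, zero_div, hend] at key
  push_cast at key
  rw [show (∫ θ in (0:ℝ)..Real.pi, Real.cos (2 * θ) / (a + Real.cos (2 * n * θ)))
      = ∫ θ in (0:ℝ)..Real.pi, f θ from rfl, ← key]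
  have step : ∀ k : ℕ, (∫ x in ((k:ℝ) * Real.pi / n)..(((k:ℕ)+1 : ℝ) * Real.pi / n), f x)
      = ∫ x in (0:ℝ)..(Real.pi / n), f (x + k * Real.pi / n) := by
    intro k
    rw [intervalIntegral.integral_comp_add_right]
    congr 1
    · ring
    · ring
  have step' : ∀ k ∈ Finset.range n,
      (∫ x in ((k:ℝ) * Real.pi / n)..((((k:ℕ):ℝ)+1) * Real.pi / n), f x)
      = ∫ x in (0:ℝ)..(Real.pi / n), f (x + k * Real.pi / n) := fun k _ => step k
  calc ∑ k ∈ Finset.range n, ∫ x in ((k:ℝ) * Real.pi / n)..((((k:ℕ):ℝ)+1) * Real.pi / n), f x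
      = ∑ k ∈ Finset.range n, ∫ x in (0:ℝ)..(Real.pi / n), f (x + k * Real.pi / n) := by
        exact Finset.sum_congr rfl step'
    _ = ∫ x in (0:ℝ)..(Real.pi / n), ∑ k ∈ Finset.range n, f (x + k * Real.pi / n) := by
        rw [intervalIntegral.integral_finset_sum]
        intro k _
        exact (hf.comp (continuous_id.add continuous_const)).intervalIntegrable _ _
    _ = ∫ x in (0:ℝ)..(Real.pi / n), (0:ℝ) := by
        apply intervalIntegral.integral_congr
        intro x _
        have hterm : ∀ k : ℕ, f (x + k * Real.pi / n)
            = Real.cos (2 * x + 2 * Real.pi * k / n) / (a + Real.cos (2 * n * x)) := by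
          intro k
          rw [hfdef]
          simp only
          congr 1
          · congr 1
            field_simp
          · congr 1
            have harg : 2 * (n:ℝ) * (x + k * Real.pi / n) = 2 * n * x + k * (2 * Real.pi) := by
              field_simp
            rw [harg, Real.cos_add_nat_mul_two_pi]
        simp only [hterm]
        rw [← Finset.sum_div, sum_cos_aux n hn (2 * x), zero_div]
    _ = 0 := by simp
end

section
/- Let ρ > 1 and n ≥ 1 an integer. Then (1/(2π))·∫₀^{2π} [π·√(ρ^{−4n} + 9 + 6ρ^{−2n}cos(2nθ))] / [2^{2n−1}·ρⁿ·√((a₂ − cos 2θ)(a_{2n} + cos 2nθ))] · (1/√2)·√(a₂ − cos 2θ) dθ ≤ (π/(ρⁿ·2^{2n−1}))·√((7ρ^{−2n} + 9ρ^{2n})/(ρ^{4n} − 1)), where a_m = (ρ^m + ρ^{−m})/2. -/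
open Real intervalIntegral MeasureTheory Filter Set

lemma cont_inv_add_cos (a : ℝ) (ha : 1 < a) :
    Continuous fun θ : ℝ => (a + Real.cos θ)⁻¹ := by
  apply Continuous.inv₀ (by continuity)
  intro θ
  nlinarith [Real.neg_one_le_cos θ]

lemma hderiv (a : ℝ) (ha : 1 < a) (θ : ℝ) (h1 : -π < θ) (h2 : θ < π) :
    HasDerivAt (fun θ : ℝ => 2 / Real.sqrt (a^2 - 1) *
      Real.arctan (Real.sqrt ((a-1)/(a+1)) * Real.tan (θ/2))) ((a + Real.cos θ)⁻¹) θ := by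
  have hc : Real.cos (θ/2) > 0 := Real.cos_pos_of_mem_Ioo ⟨by linarith, by linarith⟩
  set k := Real.sqrt ((a-1)/(a+1)) with hk
  have hkpos : 0 < k := Real.sqrt_pos.2 (div_pos (by linarith) (by linarith))
  have h3 : HasDerivAt (fun θ : ℝ => θ/2) (1/2) θ := (hasDerivAt_id θ).div_const 2
  have h4 : HasDerivAt (fun θ : ℝ => Real.tan (θ/2)) (1 / Real.cos (θ/2)^2 * (1/2)) θ :=
    by have := (Real.hasDerivAt_tan (x := θ/2) hc.ne').comp θ h3; exact this
  have h5 : HasDerivAt (fun θ : ℝ => Real.arctan (k * Real.tan (θ/2)))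
      (1 / (1 + (k * Real.tan (θ/2))^2) * (k * (1 / Real.cos (θ/2)^2 * (1/2)))) θ :=
    (Real.hasDerivAt_arctan _).comp θ (h4.const_mul k)
  have := h5.const_mul (2 / Real.sqrt (a^2 - 1))
  refine this.congr_deriv ?_
  symm
  have hcsq : Real.cos (θ/2)^2 = (1 + Real.cos θ)/2 := by
    have := Real.cos_sq (θ/2)
    rw [show 2*(θ/2) = θ by ring] at this; linarith
  have hssq : Real.sin (θ/2)^2 = (1 - Real.cos θ)/2 := by
    have := Real.sin_sq_add_cos_sq (θ/2); linarith
  have h1c : 0 < 1 + Real.cos θ := by nlinarith [sq_nonneg (Real.cos (θ/2)), hc]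
  have hac : 0 < a + Real.cos θ := by nlinarith
  have hs : Real.sqrt (a^2-1) = (a+1) * k := by
    rw [hk, ← Real.sqrt_sq (by linarith : (0:ℝ) ≤ a+1), ← Real.sqrt_mul (by positivity)]
    rw [Real.sqrt_sq (by linarith : (0:ℝ) ≤ a+1)]
    congr 1; field_simp; ring
  have hk2 : k^2 = (a-1)/(a+1) := Real.sq_sqrt (le_of_lt (div_pos (by linarith) (by linarith)))
  have htan : Real.tan (θ/2) = Real.sin (θ/2) / Real.cos (θ/2) := Real.tan_eq_sin_div_cos _
  rw [hs, htan, mul_pow, div_pow, hk2, hcsq, hssq]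
  have e1 : 1 + (a-1)/(a+1) * ((1 - Real.cos θ)/2/((1+Real.cos θ)/2))
      = 2*(a+Real.cos θ)/((a+1)*(1+Real.cos θ)) := by
    field_simp
    ring
  rw [e1]
  have ha1 : (a:ℝ)+1 ≠ 0 := by linarith
  field_simp

lemma int0pi (a : ℝ) (ha : 1 < a) :
    ∫ θ in (0:ℝ)..π, (a + Real.cos θ)⁻¹ = π / Real.sqrt (a^2 - 1) := by
  have hcont := cont_inv_add_cos a ha
  have hInt : ∀ t₁ t₂ : ℝ, IntervalIntegrable (fun θ => (a + Real.cos θ)⁻¹) volume t₁ t₂ :=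
    fun t₁ t₂ => hcont.intervalIntegrable _ _
  set F : ℝ → ℝ := fun θ => 2 / Real.sqrt (a^2 - 1) *
      Real.arctan (Real.sqrt ((a-1)/(a+1)) * Real.tan (θ/2)) with hF
  set G : ℝ → ℝ := fun c => ∫ θ in (0:ℝ)..c, (a + Real.cos θ)⁻¹ with hG
  have hGc : Continuous G := intervalIntegral.continuous_primitive hInt 0
  have heq : ∀ c ∈ Set.Ico (0:ℝ) π, G c = F c := by
    intro c hc
    have h0 : G c = F c - F 0 := by
      apply intervalIntegral.integral_eq_sub_of_hasDerivAt _ (hInt 0 c)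
      intro θ hθ
      rw [Set.uIcc_of_le hc.1] at hθ
      exact hderiv a ha θ (by have := pi_pos; cases hθ; linarith) (by cases hθ; cases hc; linarith)
    rw [h0]
    simp [hF, Real.tan_zero, Real.arctan_zero]
  have hk : (0:ℝ) < Real.sqrt ((a-1)/(a+1)) :=
    Real.sqrt_pos.2 (div_pos (by linarith) (by linarith))
  have hlimF : Tendsto F (nhdsWithin π (Set.Iio π)) (nhds (π / Real.sqrt (a^2-1))) := by
    have t1 : Tendsto (fun θ : ℝ => θ/2) (nhdsWithin π (Set.Iio π))
        (nhdsWithin (π/2) (Set.Iio (π/2))) := by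
      apply tendsto_nhdsWithin_of_tendsto_nhds_of_eventually_within
      · exact ((continuous_id.div_const 2).tendsto π).mono_left nhdsWithin_le_nhds
      · filter_upwards [self_mem_nhdsWithin] with x hx
        exact Set.mem_Iio.2 (by linarith [Set.mem_Iio.1 hx])
    have t2 : Tendsto (fun θ : ℝ => Real.tan (θ/2)) (nhdsWithin π (Set.Iio π)) atTop :=
      Real.tendsto_tan_pi_div_two.comp t1
    have t3 : Tendsto (fun θ : ℝ => Real.sqrt ((a-1)/(a+1)) * Real.tan (θ/2))
        (nhdsWithin π (Set.Iio π)) atTop := t2.const_mul_atTop hk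
    have t4 : Tendsto (fun θ : ℝ => Real.arctan (Real.sqrt ((a-1)/(a+1)) * Real.tan (θ/2)))
        (nhdsWithin π (Set.Iio π)) (nhds (π/2)) :=
      (Real.tendsto_arctan_atTop.mono_right nhdsWithin_le_nhds).comp t3
    have t5 := t4.const_mul (2 / Real.sqrt (a^2-1))
    have : π / Real.sqrt (a^2-1) = 2 / Real.sqrt (a^2-1) * (π/2) := by ring
    rw [this]
    exact t5
  have hlimG : Tendsto G (nhdsWithin π (Set.Iio π)) (nhds (G π)) :=
    (hGc.tendsto π).mono_left nhdsWithin_le_nhds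
  have hev : G =ᶠ[nhdsWithin π (Set.Iio π)] F := by
    filter_upwards [Ioo_mem_nhdsLT_of_mem (Set.mem_Ioc.2 ⟨Real.pi_pos, le_rfl⟩)] with x hx
    exact heq x ⟨hx.1.le, hx.2⟩
  exact tendsto_nhds_unique (hlimG.congr' hev) hlimF

lemma int02pi (a : ℝ) (ha : 1 < a) :
    ∫ θ in (0:ℝ)..(2*π), (a + Real.cos θ)⁻¹ = 2*π / Real.sqrt (a^2 - 1) := by
  have hInt : ∀ t₁ t₂ : ℝ, IntervalIntegrable (fun θ => (a + Real.cos θ)⁻¹) volume t₁ t₂ :=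
    fun t₁ t₂ => (cont_inv_add_cos a ha).intervalIntegrable _ _
  have h2 : ∫ θ in π..(2*π), (a + Real.cos θ)⁻¹ = ∫ θ in (0:ℝ)..π, (a + Real.cos θ)⁻¹ := by
    have := intervalIntegral.integral_comp_sub_left (a := 0) (b := π)
      (fun θ => (a + Real.cos θ)⁻¹) (2*π)
    simp only [sub_zero, show 2*π - π = π by ring] at this
    rw [← this]
    congr 1
    ext θ
    rw [show 2*π - θ = -θ + 2*π by ring, Real.cos_add_two_pi, Real.cos_neg]
  rw [← intervalIntegral.integral_add_adjacent_intervals (hInt 0 π) (hInt π (2*π)), h2,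
    int0pi a ha]
  ring

lemma int02pi_n (a : ℝ) (ha : 1 < a) (n : ℕ) (hn : 1 ≤ n) :
    ∫ θ in (0:ℝ)..(2*π), (a + Real.cos (2*n*θ))⁻¹ = 2*π / Real.sqrt (a^2 - 1) := by
  have hInt : ∀ t₁ t₂ : ℝ, IntervalIntegrable (fun θ => (a + Real.cos θ)⁻¹) volume t₁ t₂ :=
    fun t₁ t₂ => (cont_inv_add_cos a ha).intervalIntegrable _ _
  have hper : Function.Periodic (fun θ : ℝ => (a + Real.cos θ)⁻¹) (2*π) := by
    intro x; simp [Real.cos_add_two_pi]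
  have hc : ((2*n : ℕ) : ℝ) ≠ 0 := by positivity
  have key := intervalIntegral.integral_comp_mul_left (a := 0) (b := 2*π)
    (fun θ => (a + Real.cos θ)⁻¹) hc
  have hz := hper.intervalIntegral_add_zsmul_eq (2*n : ℤ) 0 hInt
  rw [show ((2*n:ℕ):ℝ) * 0 = 0 by ring] at key
  rw [zero_add, zero_add] at hz
  have hb : ((2*n:ℕ):ℝ) * (2*π) = ((2*n : ℤ) : ℝ) * (2*π) := by push_cast; ring
  rw [hb, ← zsmul_eq_mul] at key
  rw [hz] at key
  have : (fun θ : ℝ => (a + Real.cos (2*n*θ))⁻¹)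
      = fun θ : ℝ => (a + Real.cos (((2*n:ℕ):ℝ) * θ))⁻¹ := by
    ext θ; push_cast; ring_nf
  rw [this, key, int02pi a ha]
  simp only [zsmul_eq_mul, smul_eq_mul]
  push_cast
  have : ((2*n : ℕ):ℝ) ≠ 0 := hc
  field_simp

lemma cs_ineq (f : ℝ → ℝ) (hf : Continuous f) (b : ℝ) (hb : 0 < b) :
    (∫ x in (0:ℝ)..b, f x)^2 ≤ b * ∫ x in (0:ℝ)..b, (f x)^2 := by
  set S := ∫ x in (0:ℝ)..b, f x with hS
  set m := S / b with hm
  have h1 : IntervalIntegrable f volume 0 b := hf.intervalIntegrable _ _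
  have h2 : IntervalIntegrable (fun x => (f x)^2) volume 0 b :=
    (hf.pow 2).intervalIntegrable _ _
  have h3 : IntervalIntegrable (fun x => 2*m * f x) volume 0 b :=
    ((continuous_const.mul hf)).intervalIntegrable _ _
  have hnn : 0 ≤ ∫ x in (0:ℝ)..b, (f x - m)^2 :=
    intervalIntegral.integral_nonneg hb.le (fun x _ => sq_nonneg _)
  have hexp : ∫ x in (0:ℝ)..b, (f x - m)^2
      = (∫ x in (0:ℝ)..b, (f x)^2) - 2*m*S + b*m^2 := by
    have e : (fun x => (f x - m)^2) = fun x => ((f x)^2 - 2*m * f x) + m^2 := by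
      ext x; ring
    rw [e, intervalIntegral.integral_add (h2.sub h3) (intervalIntegrable_const),
      intervalIntegral.integral_sub h2 h3, intervalIntegral.integral_const_mul,
      intervalIntegral.integral_const]
    simp only [← hS, smul_eq_mul, sub_zero]
  rw [hexp, hm] at hnn
  have h4 : 2*(S/b)*S - b*(S/b)^2 = S^2/b := by
    field_simp
    ring
  have : 0 ≤ (∫ x in (0:ℝ)..b, (f x)^2) - S^2/b := by linarith
  have := mul_le_mul_of_nonneg_left (by linarith : S^2/b ≤ ∫ x in (0:ℝ)..b, (f x)^2) hb.le
  calc S^2 = b * (S^2/b) := by field_simp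
  _ ≤ b * ∫ x in (0:ℝ)..b, (f x)^2 := this

lemma alg1 (p D s2 sx sy sN : ℝ) (hD : D ≠ 0) (hs2 : s2 ≠ 0) (hsx : sx ≠ 0)
    (hsy : sy ≠ 0) :
    p * sN / (D * (sx * sy)) * (1/s2 * sx) = p/(D*s2) * (sN/sy) := by
  field_simp

lemma alg3 (R ri c : ℝ) (h1 : R * ri = 1) (hy : (R + ri)/2 + c ≠ 0) :
    (ri*ri + 9 + 6*ri*c) / ((R + ri)/2 + c)
      = 6*ri + (6 - 2*(ri*ri)) * ((R + ri)/2 + c)⁻¹ := by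
  have hz : ((R + ri)/2 + c) * ((R + ri)/2 + c)⁻¹ = 1 := mul_inv_cancel₀ hy
  rw [div_eq_iff hy]
  linear_combination (2*(ri*ri) - 6)*hz + (-3)*h1

lemma alg4 (p R : ℝ) (hR : 1 < R) (hp : 0 < p) :
    2*p*(6*R⁻¹) + (6 - 2*(R⁻¹*R⁻¹)) * (2*p/((R - R⁻¹)/2)) ≤ 4*p*((7*R⁻¹ + 9*R)/(R^2 - 1)) := by
  have hR0 : 0 < R := by linarith
  have hi : R⁻¹ < 1 := by rw [inv_lt_one_iff₀]; right; exact hR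
  have hi0 : 0 < R⁻¹ := by positivity
  have h2 : 0 < R - R⁻¹ := by linarith
  have h3 : 0 < R^2 - 1 := by nlinarith
  have hrr : R * R⁻¹ = 1 := mul_inv_cancel₀ hR0.ne'
  rw [← sub_nonneg]
  have key : 4*p*((7*R⁻¹ + 9*R)/(R^2 - 1))
      - (2*p*(6*R⁻¹) + (6 - 2*(R⁻¹*R⁻¹)) * (2*p/((R - R⁻¹)/2)))
      = 48*p*R⁻¹/(R^2-1) := by
    have e1 : 2*p/((R - R⁻¹)/2) = 4*p*R/(R^2-1) := by
      rw [div_eq_div_iff (by positivity) h3.ne']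
      linear_combination 2*p*hrr
    rw [e1]
    field_simp
    ring_nf
  rw [key]
  positivity

lemma alg2 (p u v s2 sX : ℝ) (hu : u ≠ 0) (hv : v ≠ 0) (hs2 : s2 ≠ 0) (hp : p ≠ 0) :
    1/(2*p) * (p/(u*v*s2) * (2*p*s2*sX)) = p/(v*u) * sX := by
  field_simp

set_option maxHeartbeats 1000000 in
theorem stmt_15 (ρ : ℝ) (hρ : 1 < ρ) (n : ℕ) (hn : 1 ≤ n)
    (a : ℕ → ℝ) (ha : ∀ m, a m = (ρ ^ m + ρ ^ (-(m : ℤ))) / 2) :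
    (1 / (2 * Real.pi)) *
        ∫ θ in (0:ℝ)..(2 * Real.pi),
          Real.pi * Real.sqrt (ρ ^ (-(4 * n : ℤ)) + 9 + 6 * ρ ^ (-(2 * n : ℤ)) *
              Real.cos (2 * n * θ)) /
            (2 ^ (2 * n - 1) * ρ ^ n *
              Real.sqrt ((a 2 - Real.cos (2 * θ)) * (a (2 * n) + Real.cos (2 * n * θ)))) *
          ((1 / Real.sqrt 2) * Real.sqrt (a 2 - Real.cos (2 * θ))) ≤
      Real.pi / (ρ ^ n * 2 ^ (2 * n - 1)) *
        Real.sqrt ((7 * ρ ^ (-(2 * n : ℤ)) + 9 * ρ ^ (2 * n)) / (ρ ^ (4 * n) - 1)) := by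
  have hρ0 : (0:ℝ) < ρ := by linarith
  have hπ := Real.pi_pos
  set r := ρ ^ (2*n) with hrdef
  have hr1 : 1 < r := hrdef ▸ one_lt_pow₀ hρ (by omega)
  have hr0 : 0 < r := by positivity
  have hri : r⁻¹ < 1 := by rw [inv_lt_one_iff₀]; right; exact hr1
  have hri0 : 0 < r⁻¹ := by positivity
  have hrr : r * r⁻¹ = 1 := mul_inv_cancel₀ hr0.ne'
  have eneg : ∀ m : ℕ, ρ ^ (-(m : ℤ)) = (ρ ^ m)⁻¹ := fun m => by
    rw [zpow_neg, zpow_natCast]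
  have e2n : ρ ^ (-(2 * n : ℤ)) = r⁻¹ := by
    rw [show -(2 * (n:ℤ)) = -((2*n : ℕ) : ℤ) by push_cast; ring, eneg, hrdef]
  have e4 : ρ ^ (4*n) = r^2 := by rw [hrdef, ← pow_mul]; congr 1; ring
  have e4n : ρ ^ (-(4 * n : ℤ)) = (r^2)⁻¹ := by
    rw [show -(4 * (n:ℤ)) = -((4*n : ℕ) : ℤ) by push_cast; ring, eneg, e4]
  have ha2 : a 2 = (ρ^2 + (ρ^2)⁻¹)/2 := by rw [ha, eneg]
  have haN : a (2*n) = (r + r⁻¹)/2 := by rw [ha, eneg, hrdef]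
  clear_value r
  have ha2gt : 1 < a 2 := by
    rw [ha2]
    have h1 : 0 < ρ^2 := by positivity
    have h2 : ρ^2 * (ρ^2)⁻¹ = 1 := mul_inv_cancel₀ h1.ne'
    have hρ2 : 1 < ρ^2 := by nlinarith
    have h3 : (0:ℝ) < (ρ^2 - 1)^2 := by nlinarith
    have h4 : 0 < (ρ^2)⁻¹ := by positivity
    nlinarith
  have haN1 : 1 < a (2*n) := by rw [haN]; nlinarith [sq_nonneg (r - 1)]
  have hx : ∀ θ : ℝ, 0 < a 2 - Real.cos θ := fun θ => by
    nlinarith [Real.cos_le_one θ]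
  have hy : ∀ t : ℝ, 0 < a (2*n) + Real.cos t := fun t => by
    nlinarith [Real.neg_one_le_cos t]
  have hrsq : (r^2)⁻¹ = r⁻¹ * r⁻¹ := by rw [sq, mul_inv]
  have hN : ∀ θ : ℝ, 0 ≤ (r^2)⁻¹ + 9 + 6*r⁻¹*Real.cos (2*n*θ) := fun θ => by
    have hc := Real.neg_one_le_cos (2*(n:ℝ)*θ)
    nlinarith [sq_nonneg (r⁻¹ - 3), mul_le_mul_of_nonneg_left hc hri0.le]
  have hc1 : Continuous fun θ : ℝ => 2*(n:ℝ)*θ := continuous_const.mul continuous_id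
  have hcnum : Continuous fun θ : ℝ => (r^2)⁻¹ + 9 + 6*r⁻¹*Real.cos (2*n*θ) :=
    continuous_const.add (continuous_const.mul (Real.continuous_cos.comp hc1))
  have hcden : Continuous fun θ : ℝ => a (2*n) + Real.cos (2*n*θ) :=
    continuous_const.add (Real.continuous_cos.comp hc1)
  set g : ℝ → ℝ := fun θ => Real.sqrt ((r^2)⁻¹ + 9 + 6*r⁻¹*Real.cos (2*n*θ)) /
      Real.sqrt (a (2*n) + Real.cos (2*n*θ)) with hgdef
  have hg_cont : Continuous g := by
    rw [hgdef]
    exact Continuous.div (Real.continuous_sqrt.comp hcnum) (Real.continuous_sqrt.comp hcden)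
      (fun θ => (Real.sqrt_pos.2 (hy _)).ne')
  have hg0 : ∀ θ : ℝ, 0 ≤ g θ := fun θ => by
    rw [hgdef]; exact div_nonneg (Real.sqrt_nonneg _) (Real.sqrt_nonneg _)
  have hgval : ∀ θ : ℝ, g θ = Real.sqrt ((r^2)⁻¹ + 9 + 6*r⁻¹*Real.cos (2*n*θ)) /
      Real.sqrt (a (2*n) + Real.cos (2*n*θ)) := fun θ => by rw [hgdef]
  have hgsq : ∀ θ : ℝ, (g θ)^2
      = 6*r⁻¹ + (6 - 2*(r^2)⁻¹) * (a (2*n) + Real.cos (2*n*θ))⁻¹ := by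
    intro θ
    rw [hgval θ, div_pow, Real.sq_sqrt (hN θ), Real.sq_sqrt (hy (2*n*θ)).le]
    have hy2 : (r + r⁻¹)/2 + Real.cos (2*(n:ℝ)*θ) ≠ 0 := by
      have := hy (2*(n:ℝ)*θ); rw [haN] at this; exact this.ne'
    rw [haN, hrsq]
    exact alg3 r r⁻¹ (Real.cos (2*(n:ℝ)*θ)) hrr hy2
  clear_value g
  have hD0 : (0:ℝ) < 2 ^ (2*n-1) * ρ ^ n := by positivity
  set C : ℝ := π / (2 ^ (2*n-1) * ρ ^ n * Real.sqrt 2) with hCdef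
  have hs2 : (0:ℝ) < Real.sqrt 2 := Real.sqrt_pos.2 (by norm_num)
  -- Step A : rewrite the integral
  have key : (∫ θ in (0:ℝ)..(2 * π),
      π * Real.sqrt (ρ ^ (-(4 * n : ℤ)) + 9 + 6 * ρ ^ (-(2 * n : ℤ)) * Real.cos (2 * n * θ)) /
        (2 ^ (2 * n - 1) * ρ ^ n *
          Real.sqrt ((a 2 - Real.cos (2 * θ)) * (a (2 * n) + Real.cos (2 * n * θ)))) *
        ((1 / Real.sqrt 2) * Real.sqrt (a 2 - Real.cos (2 * θ))))
      = C * ∫ θ in (0:ℝ)..(2*π), g θ := by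
    rw [← intervalIntegral.integral_const_mul]
    apply intervalIntegral.integral_congr
    intro θ _
    dsimp only
    have hsx : 0 < Real.sqrt (a 2 - Real.cos (2*θ)) := Real.sqrt_pos.2 (hx _)
    have hsy : 0 < Real.sqrt (a (2*n) + Real.cos (2*n*θ)) := Real.sqrt_pos.2 (hy _)
    rw [e4n, e2n, Real.sqrt_mul (hx (2*θ)).le, hCdef, hgval θ]
    exact alg1 π (2 ^ (2*n-1) * ρ ^ n) (Real.sqrt 2) _ _ _ hD0.ne' hs2.ne'
      hsx.ne' hsy.ne'
  rw [key]
  set S : ℝ := ∫ θ in (0:ℝ)..(2*π), g θ with hSdef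
  clear_value S
  have hS0 : 0 ≤ S := by
    rw [hSdef]
    exact intervalIntegral.integral_nonneg (by positivity) (fun θ _ => hg0 θ)
  -- Step B : value of ∫ g²
  have hsqN : Real.sqrt ((a (2*n))^2 - 1) = (r - r⁻¹)/2 := by
    rw [haN, show ((r + r⁻¹)/2)^2 - 1 = ((r - r⁻¹)/2)^2 by field_simp; ring]
    exact Real.sqrt_sq (by linarith)
  have hQval : ∫ θ in (0:ℝ)..(2*π), (g θ)^2
      = 2*π*(6*r⁻¹) + (6 - 2*(r^2)⁻¹) * (2*π/((r - r⁻¹)/2)) := by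
    rw [intervalIntegral.integral_congr (g := fun θ : ℝ =>
        6*r⁻¹ + (6 - 2*(r^2)⁻¹) * (a (2*n) + Real.cos (2*n*θ))⁻¹) (fun θ _ => hgsq θ)]
    have hic : Continuous fun θ : ℝ => (a (2*n) + Real.cos (2*n*θ))⁻¹ :=
      Continuous.inv₀ hcden (fun θ => (hy _).ne')
    rw [intervalIntegral.integral_add (g := fun θ : ℝ => (6 - 2*(r^2)⁻¹) * (a (2*n) + Real.cos (2*n*θ))⁻¹) (intervalIntegrable_const)
        ((continuous_const.mul hic).intervalIntegrable _ _),
      intervalIntegral.integral_const, intervalIntegral.integral_const_mul,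
      int02pi_n (a (2*n)) haN1 n hn, hsqN]
    simp only [smul_eq_mul, sub_zero]
  -- Step C : Cauchy-Schwarz
  have hCS := cs_ineq g hg_cont (2*π) (by positivity)
  rw [← hSdef, hQval] at hCS
  -- Step D : final estimates
  set X : ℝ := (7*r⁻¹ + 9*r)/(r^2 - 1) with hXdef
  have hrd : (0:ℝ) < r^2 - 1 := by nlinarith
  have hrm : (0:ℝ) < r - r⁻¹ := by linarith
  have hX0 : 0 ≤ X := div_nonneg (by positivity) hrd.le
  have hQX : 2*π*(6*r⁻¹) + (6 - 2*(r^2)⁻¹) * (2*π/((r - r⁻¹)/2)) ≤ 4*π*X := by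
    rw [hXdef, hrsq]
    exact alg4 π r hr1 hπ
  have hSle : S ≤ Real.sqrt (2*π*(4*π*X)) := by
    rw [Real.le_sqrt hS0 (by positivity)]
    calc S^2 ≤ 2*π * (2*π*(6*r⁻¹) + (6 - 2*(r^2)⁻¹) * (2*π/((r - r⁻¹)/2))) := hCS
    _ ≤ 2*π*(4*π*X) := by nlinarith
  have hsqrt_eq : Real.sqrt (2*π*(4*π*X)) = 2*π*Real.sqrt 2*Real.sqrt X := by
    have h2 : Real.sqrt 2 ^ 2 = 2 := Real.sq_sqrt (by norm_num)
    rw [show 2*π*(4*π*X) = (2*π*Real.sqrt 2)^2 * X by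
      rw [mul_pow, mul_pow, h2]; ring]
    rw [Real.sqrt_mul (by positivity), Real.sqrt_sq (by positivity)]
  rw [hsqrt_eq] at hSle
  have hC0 : 0 ≤ C := by positivity
  calc (1/(2*π)) * (C * S) ≤ (1/(2*π)) * (C * (2*π*Real.sqrt 2*Real.sqrt X)) := by
        gcongr
  _ = π / (ρ ^ n * 2 ^ (2*n-1)) * Real.sqrt X := by
        rw [hCdef]
        exact alg2 π (2 ^ (2*n-1)) (ρ ^ n) (Real.sqrt 2) (Real.sqrt X)
          (by positivity) (by positivity) hs2.ne' hπ.ne'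
  _ = π / (ρ ^ n * 2 ^ (2*n-1)) *
        Real.sqrt ((7 * ρ ^ (-(2 * n : ℤ)) + 9 * r) / (ρ ^ (4 * n) - 1)) := by
        rw [e2n, e4, hXdef]
end

section
/- Let ρ > 1, n ≥ 1, and set a₁ = (ρ + ρ⁻¹)/2. Then the circumference of the ellipse with semi-axes a₁ = (ρ+ρ⁻¹)/2 and b₁ = (ρ−ρ⁻¹)/2 satisfies l(E_ρ) ≤ 2πa₁·(1 − (1/4)a₁^{−2} − (3/64)a₁^{−4} − (5/256)a₁^{−6}). -/
open Real intervalIntegral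

theorem stmt_18 (ρ : ℝ) (hρ : 1 < ρ)
    (a₁ b₁ : ℝ) (ha₁ : a₁ = (ρ + ρ⁻¹) / 2) (hb₁ : b₁ = (ρ - ρ⁻¹) / 2) :
    (∫ t in (0:ℝ)..(2 * Real.pi),
        Real.sqrt (a₁ ^ 2 * (Real.sin t) ^ 2 + b₁ ^ 2 * (Real.cos t) ^ 2)) ≤
      2 * Real.pi * a₁ *
        (1 - (1 / 4) * a₁ ^ (-2 : ℤ) - (3 / 64) * a₁ ^ (-4 : ℤ) -
          (5 / 256) * a₁ ^ (-6 : ℤ)) := by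
  have hπ := Real.pi_pos
  have hρ0 : (0:ℝ) < ρ := lt_trans one_pos hρ
  have hρi : ρ * ρ⁻¹ = 1 := mul_inv_cancel₀ (ne_of_gt hρ0)
  have ha : 1 < a₁ := by
    rw [ha₁, lt_div_iff₀ two_pos]
    nlinarith [mul_pos (sub_pos.mpr hρ) (sub_pos.mpr hρ), inv_pos.mpr hρ0]
  have ha0 : (0:ℝ) < a₁ := lt_trans one_pos ha
  have hane : a₁ ≠ 0 := ne_of_gt ha0
  have hb2 : b₁ ^ 2 = a₁ ^ 2 - 1 := by
    rw [ha₁, hb₁]; field_simp; nlinarith [hρi]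
  -- pointwise bound
  set P : ℝ → ℝ := fun t =>
    a₁ - (1 / (2 * a₁)) * Real.cos t ^ 2 - (1 / (8 * a₁ ^ 3)) * Real.cos t ^ 4
      - (1 / (16 * a₁ ^ 5)) * Real.cos t ^ 6 with hP
  have key : ∀ t ∈ Set.Icc (0:ℝ) (2 * Real.pi),
      Real.sqrt (a₁ ^ 2 * Real.sin t ^ 2 + b₁ ^ 2 * Real.cos t ^ 2) ≤ P t := by
    intro t _
    set c := Real.cos t with hc
    have hc2 : c ^ 2 ≤ 1 := by
      have := Real.neg_one_le_cos t
      have := Real.cos_le_one t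
      nlinarith
    have hc0 : (0:ℝ) ≤ c ^ 2 := sq_nonneg c
    have hinner : a₁ ^ 2 * Real.sin t ^ 2 + b₁ ^ 2 * Real.cos t ^ 2 = a₁ ^ 2 - c ^ 2 := by
      have hs : Real.sin t ^ 2 = 1 - c ^ 2 := by
        rw [hc]; nlinarith [Real.sin_sq_add_cos_sq t]
      rw [hs, hb2]; ring
    have hPeq : P t = (16 * a₁ ^ 6 - 8 * a₁ ^ 4 * c ^ 2 - 2 * a₁ ^ 2 * c ^ 4 - c ^ 6)
        / (16 * a₁ ^ 5) := by
      rw [hP]; field_simp; ring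
    have hNum : 0 ≤ 16 * a₁ ^ 6 - 8 * a₁ ^ 4 * c ^ 2 - 2 * a₁ ^ 2 * c ^ 4 - c ^ 6 := by
      nlinarith [pow_le_pow_left₀ hc0 hc2 2, pow_le_pow_left₀ hc0 hc2 3,
        one_le_pow₀ (n:=2) ha.le, one_le_pow₀ (n:=4) ha.le,
        one_le_pow₀ (n:=6) ha.le, mul_pos (pow_pos ha0 4) (pow_pos ha0 2)]
    have hPnn : 0 ≤ P t := by
      rw [hPeq]; exact div_nonneg hNum (by positivity)
    have hsq : a₁ ^ 2 - c ^ 2 ≤ (P t) ^ 2 := by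
      rw [hPeq, div_pow, le_div_iff₀ (by positivity)]
      have idd : (16 * a₁ ^ 6 - 8 * a₁ ^ 4 * c ^ 2 - 2 * a₁ ^ 2 * c ^ 4 - c ^ 6) ^ 2
          - (a₁ ^ 2 - c ^ 2) * (16 * a₁ ^ 5) ^ 2
          = c ^ 8 * (20 * a₁ ^ 4 + 4 * a₁ ^ 2 * c ^ 2 + c ^ 4) := by ring
      nlinarith [pow_nonneg hc0 4, pow_pos ha0 4, mul_nonneg (pow_nonneg hc0 4)
        (by positivity : (0:ℝ) ≤ 20 * a₁ ^ 4 + 4 * a₁ ^ 2 * c ^ 2 + c ^ 4)]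
    calc Real.sqrt (a₁ ^ 2 * Real.sin t ^ 2 + b₁ ^ 2 * Real.cos t ^ 2)
        ≤ Real.sqrt ((P t) ^ 2) := by
          apply Real.sqrt_le_sqrt; rw [hinner]; exact hsq
      _ = P t := by rw [Real.sqrt_sq hPnn]
  -- integrability
  have hi1 : IntervalIntegrable (fun t =>
      Real.sqrt (a₁ ^ 2 * Real.sin t ^ 2 + b₁ ^ 2 * Real.cos t ^ 2))
      MeasureTheory.volume 0 (2 * Real.pi) := by
    apply Continuous.intervalIntegrable; fun_prop
  have hi2 : IntervalIntegrable P MeasureTheory.volume 0 (2 * Real.pi) := by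
    apply Continuous.intervalIntegrable; rw [hP]; fun_prop
  have hmono := intervalIntegral.integral_mono_on (by positivity) hi1 hi2 key
  refine le_trans hmono ?_
  -- compute the integral of P
  have I2 : ∫ t in (0:ℝ)..(2 * Real.pi), Real.cos t ^ 2 = Real.pi := by
    simp [Real.cos_two_pi, Real.sin_two_pi]
  have I4 : ∫ t in (0:ℝ)..(2 * Real.pi), Real.cos t ^ 4 = 3 * Real.pi / 4 := by
    have h := integral_cos_pow (a := (0:ℝ)) (b := 2 * Real.pi) 2
    rw [h]; simp [Real.cos_two_pi, Real.sin_two_pi]; ring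
  have I6 : ∫ t in (0:ℝ)..(2 * Real.pi), Real.cos t ^ 6 = 5 * Real.pi / 8 := by
    have h4 := integral_cos_pow (a := (0:ℝ)) (b := 2 * Real.pi) 2
    have h6 := integral_cos_pow (a := (0:ℝ)) (b := 2 * Real.pi) 4
    rw [h6, h4]; simp [Real.cos_two_pi, Real.sin_two_pi]; ring
  have hIP : ∫ t in (0:ℝ)..(2 * Real.pi), P t
      = a₁ * (2 * Real.pi) - (1 / (2 * a₁)) * Real.pi
        - (1 / (8 * a₁ ^ 3)) * (3 * Real.pi / 4)
        - (1 / (16 * a₁ ^ 5)) * (5 * Real.pi / 8) := by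
    rw [hP]
    rw [intervalIntegral.integral_sub (by apply Continuous.intervalIntegrable; fun_prop)
        (by apply Continuous.intervalIntegrable; fun_prop),
      intervalIntegral.integral_sub (by apply Continuous.intervalIntegrable; fun_prop)
        (by apply Continuous.intervalIntegrable; fun_prop),
      intervalIntegral.integral_sub (by apply Continuous.intervalIntegrable; fun_prop)
        (by apply Continuous.intervalIntegrable; fun_prop)]
    rw [intervalIntegral.integral_const_mul, intervalIntegral.integral_const_mul,
      intervalIntegral.integral_const_mul, intervalIntegral.integral_const, I2, I4, I6]
    simp; ring
  rw [hIP]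
  have hz : a₁ ^ (-2 : ℤ) = (a₁ ^ 2)⁻¹ ∧ a₁ ^ (-4 : ℤ) = (a₁ ^ 4)⁻¹
      ∧ a₁ ^ (-6 : ℤ) = (a₁ ^ 6)⁻¹ := by
    refine ⟨?_, ?_, ?_⟩ <;> simp [zpow_neg] <;> norm_cast
  rw [hz.1, hz.2.1, hz.2.2]
  apply le_of_eq
  field_simp
  ring
end

section
/- Let f be analytic on the closed interior of the ellipse E_ρ for some ρ > 1, and let α_k = (1/π)∫_{−1}^1 (1−t²)^{−1/2} f(t) T_k(t) dt be its Chebyshev–Fourier coefficients. Then |α_k| ≤ (2/ρ^k)·max_{z ∈ E_ρ} |f(z)| for every k ≥ 0. -/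
/-- The closed interior of the ellipse `E_ρ` with foci `±1` and sum of semi-axes `ρ`,
parametrized via the Joukowski map as the image of the closed annulus `1 ≤ |w| ≤ ρ`. -/
def closedEllipseInterior (ρ : ℝ) : Set ℂ :=
  {z : ℂ | ∃ w : ℂ, 1 ≤ ‖w‖ ∧ ‖w‖ ≤ ρ ∧ z = (w + w⁻¹) / 2}

/-- The ellipse `E_ρ` itself: image of the circle `|w| = ρ` under the Joukowski map. -/
def ellipse (ρ : ℝ) : Set ℂ :=
  {z : ℂ | ∃ w : ℂ, ‖w‖ = ρ ∧ z = (w + w⁻¹) / 2}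

open MeasureTheory Real Set intervalIntegral

section helpers
variable (ρ : ℝ) (hρ : 1 < ρ) (f : ℂ → ℂ) (k : ℕ)

lemma hJmem' : ∀ w : ℂ, 1 ≤ ‖w‖ → ‖w‖ ≤ ρ →
    (w + w⁻¹)/2 ∈ closedEllipseInterior ρ := fun w h1 h2 => ⟨w, h1, h2, rfl⟩

lemma hcosmem' (hρ : 1 < ρ) : ∀ x : ℝ, ((Real.cos x : ℂ)) ∈ closedEllipseInterior ρ := by
  intro x
  have h : ((Real.cos x : ℂ))
      = (Complex.exp (x * Complex.I) + (Complex.exp (x * Complex.I))⁻¹)/2 := by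
    rw [← Complex.exp_neg, Complex.ofReal_cos, Complex.cos]
    ring_nf
  rw [h]
  refine hJmem' ρ _ ?_ ?_ <;> rw [Complex.norm_exp] <;> simp [hρ.le]

lemma hEsub' (hρ : 1 < ρ) : ellipse ρ ⊆ closedEllipseInterior ρ := by
  rintro z ⟨w, hw, rfl⟩
  exact ⟨w, by rw [hw]; exact hρ.le, by rw [hw], rfl⟩

lemma hcompE' (hρ : 1 < ρ) : IsCompact (ellipse ρ) := by
  have h0 : (0:ℝ) < ρ := lt_trans one_pos hρ
  have hEeq : ellipse ρ = (fun w : ℂ => (w + w⁻¹)/2) '' Metric.sphere 0 ρ := by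
    ext z
    simp only [ellipse, Set.mem_setOf_eq, Set.mem_image, Metric.mem_sphere, Complex.dist_eq,
      sub_zero]
    constructor
    · rintro ⟨w, h1, h2⟩; exact ⟨w, h1, h2.symm⟩
    · rintro ⟨w, h1, h2⟩; exact ⟨w, h1, h2.symm⟩
  rw [hEeq]
  apply (isCompact_sphere (0:ℂ) ρ).image_of_continuousOn
  apply ContinuousOn.div_const
  apply continuousOn_id.add
  apply ContinuousOn.inv₀ continuousOn_id
  intro w hw
  rw [Metric.mem_sphere, Complex.dist_eq, sub_zero] at hw
  intro h0'
  simp only [id_eq] at h0'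
  rw [h0'] at hw; simp at hw; exact absurd hw (ne_of_gt h0).symm

end helpers

lemma hdiff' (ρ : ℝ) (hρ : 1 < ρ) (f : ℂ → ℂ)
    (hf : DifferentiableOn ℂ f (closedEllipseInterior ρ)) (k : ℕ) :
    DifferentiableOn ℂ (fun w => f ((w + w⁻¹)/2) * w ^ (-(k+1) : ℤ))
      (Metric.closedBall 0 ρ \ Metric.ball 0 1) := by
  set A : Set ℂ := Metric.closedBall 0 ρ \ Metric.ball 0 1 with hA
  have habs : ∀ w ∈ A, 1 ≤ ‖w‖ ∧ ‖w‖ ≤ ρ := by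
    intro w hw
    constructor
    · have := hw.2
      rw [Metric.mem_ball, Complex.dist_eq, sub_zero] at this
      exact not_lt.1 this
    · have := hw.1
      rwa [Metric.mem_closedBall, Complex.dist_eq, sub_zero] at this
  intro w hw
  obtain ⟨hw1, hwρ⟩ := habs w hw
  have hw0 : w ≠ 0 := by
    intro h0; rw [h0] at hw1; simp at hw1; linarith
  have hJd : DifferentiableWithinAt ℂ (fun w : ℂ => (w + w⁻¹)/2) A w :=
    ((differentiableAt_id.add (differentiableAt_inv hw0)).div_const 2).differentiableWithinAt
  have hmaps : Set.MapsTo (fun w : ℂ => (w + w⁻¹)/2) A (closedEllipseInterior ρ) := by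
    intro x hx
    exact hJmem' ρ x (habs x hx).1 (habs x hx).2
  have hfd : DifferentiableWithinAt ℂ (f ∘ fun w : ℂ => (w + w⁻¹)/2) A w :=
    DifferentiableWithinAt.comp w (hf _ (hJmem' ρ w hw1 hwρ)) hJd hmaps
  exact hfd.mul ((differentiableAt_zpow.2 (Or.inl hw0)).differentiableWithinAt)

lemma hkey' (ρ : ℝ) (hρ : 1 < ρ) (f : ℂ → ℂ)
    (hf : DifferentiableOn ℂ f (closedEllipseInterior ρ)) (k : ℕ) :
    (∮ z in C(0, ρ), f ((z + z⁻¹)/2) * z ^ (-(k+1) : ℤ))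
      = ∮ z in C(0, 1), f ((z + z⁻¹)/2) * z ^ (-(k+1) : ℤ) := by
  have hd := hdiff' ρ hρ f hf k
  refine Complex.circleIntegral_eq_of_differentiable_on_annulus_off_countable one_pos hρ.le
    Set.countable_empty hd.continuousOn ?_
  intro z hz
  rw [Set.diff_empty] at hz
  have hopen : IsOpen (Metric.ball (0:ℂ) ρ \ Metric.closedBall 0 1) :=
    Metric.isOpen_ball.sdiff Metric.isClosed_closedBall
  have hsub : Metric.ball (0:ℂ) ρ \ Metric.closedBall 0 1
      ⊆ Metric.closedBall 0 ρ \ Metric.ball 0 1 :=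
    Set.diff_subset_diff Metric.ball_subset_closedBall Metric.ball_subset_closedBall
  exact (hd z (hsub hz)).differentiableAt (Filter.mem_of_superset (hopen.mem_nhds hz) hsub)


lemma cos_image_Ioo : Real.cos '' Set.Ioo 0 π = Set.Ioo (-1:ℝ) 1 := by
  ext y
  constructor
  · rintro ⟨x, hx, rfl⟩
    have h0 : (0:ℝ) ∈ Icc 0 π := ⟨le_refl _, Real.pi_pos.le⟩
    have hπ : π ∈ Icc 0 π := ⟨Real.pi_pos.le, le_refl _⟩
    have hxm : x ∈ Icc 0 π := ⟨hx.1.le, hx.2.le⟩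
    constructor
    · have := Real.strictAntiOn_cos hxm hπ hx.2
      simpa using this
    · have := Real.strictAntiOn_cos h0 hxm hx.1
      simpa using this
  · intro hy
    have hc : Real.cos (Real.arccos y) = y := Real.cos_arccos hy.1.le hy.2.le
    have hlt : Real.arccos y < π := by
      rcases lt_or_eq_of_le (Real.arccos_le_pi y) with h | h
      · exact h
      · exfalso; rw [h, Real.cos_pi] at hc; linarith [hy.1]
    exact ⟨Real.arccos y, ⟨Real.arccos_pos.2 hy.2, hlt⟩, hc⟩

lemma step1 (f : ℂ → ℂ) (k : ℕ) :
    (∫ t in (-1:ℝ)..1,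
      ((1 - t ^ 2 : ℝ) ^ (-(1 / 2 : ℝ)) : ℝ) * f t * (Polynomial.Chebyshev.T ℂ k).eval (t : ℂ))
    = ∫ x in (0:ℝ)..π, f (Real.cos x) * (Real.cos (k * x) : ℝ) := by
  rw [intervalIntegral.integral_of_le (by norm_num), MeasureTheory.integral_Ioc_eq_integral_Ioo,
    ← cos_image_Ioo,
    integral_image_eq_integral_abs_deriv_smul measurableSet_Ioo
      (fun x _ => (Real.hasDerivAt_cos x).hasDerivWithinAt)
      (Real.injOn_cos.mono Set.Ioo_subset_Icc_self),
    intervalIntegral.integral_of_le Real.pi_pos.le, MeasureTheory.integral_Ioc_eq_integral_Ioo]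
  apply MeasureTheory.setIntegral_congr_fun measurableSet_Ioo
  intro x hx
  have hs : 0 < Real.sin x := Real.sin_pos_of_pos_of_lt_pi hx.1 hx.2
  have h1 : (1 - Real.cos x ^ 2 : ℝ) ^ (-(1 / 2 : ℝ)) = (Real.sin x)⁻¹ := by
    rw [← Real.sin_sq, ← Real.rpow_natCast (Real.sin x) 2, ← Real.rpow_mul hs.le]
    norm_num
    exact (Real.rpow_neg_one _)
  have h2 : ((Real.cos x : ℂ)) = Complex.cos x := Complex.ofReal_cos x
  have h3 : (Polynomial.Chebyshev.T ℂ k).eval ((Real.cos x : ℂ)) = Complex.cos (k * x) := by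
    rw [h2]
    simpa using Polynomial.Chebyshev.T_complex_cos (x : ℂ) k
  simp only [abs_neg, abs_of_pos hs, h1, h3]
  have h4 : ((Real.cos (k * x) : ℂ)) = Complex.cos (k * x) := by
    push_cast [Complex.ofReal_cos]; ring_nf
  rw [h4]
  rw [Complex.real_smul]
  push_cast
  have hne : Complex.sin x ≠ 0 := by
    rw [← Complex.ofReal_sin]
    exact_mod_cast hs.ne'
  field_simp


lemma half_lemma (F : ℝ → ℂ) (hF : Continuous F) (hsym : ∀ x, F (2*π - x) = F x) :
    ∫ x in (0:ℝ)..(2*π), F x = 2 * ∫ x in (0:ℝ)..π, F x := by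
  have h1 : (∫ x in (0:ℝ)..π, F x) + ∫ x in π..(2*π), F x = ∫ x in (0:ℝ)..(2*π), F x :=
    intervalIntegral.integral_add_adjacent_intervals (hF.intervalIntegrable _ _)
      (hF.intervalIntegrable _ _)
  have h2 : ∫ x in π..(2*π), F x = ∫ x in (0:ℝ)..π, F x := by
    have h3 := intervalIntegral.integral_comp_sub_left (a := π) (b := 2*π) F (2*π)
    rw [show (2*π - (2*π) : ℝ) = 0 by ring, show (2*π - π : ℝ) = π by ring] at h3
    rw [← h3]
    exact intervalIntegral.integral_congr fun x _ => (hsym x).symm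
  rw [← h1, h2]; ring

lemma odd_lemma (F : ℝ → ℂ) (hodd : ∀ x, F (2*π - x) = -F x) :
    ∫ x in (0:ℝ)..(2*π), F x = 0 := by
  have h3 := intervalIntegral.integral_comp_sub_left (a := 0) (b := 2*π) F (2*π)
  rw [show (2*π - (2*π) : ℝ) = 0 by ring, show (2*π - 0 : ℝ) = 2*π by ring] at h3
  have h4 : ∫ x in (0:ℝ)..(2*π), F (2*π - x) = -∫ x in (0:ℝ)..(2*π), F x := by
    rw [intervalIntegral.integral_congr (g := fun x => -F x) fun x _ => hodd x]
    exact intervalIntegral.integral_neg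
  rw [h4] at h3
  have : (2 : ℂ) * ∫ x in (0:ℝ)..(2*π), F x = 0 := by linear_combination -h3
  simpa using this

lemma circ1 (f : ℂ → ℂ) (k : ℕ) :
    (∮ z in C(0,1), f ((z + z⁻¹)/2) * z^(-(k+1) : ℤ))
      = Complex.I * ∫ x in (0:ℝ)..(2*π), f (Real.cos x) * Complex.exp (-(k*x) * Complex.I) := by
  rw [← intervalIntegral.integral_const_mul]
  simp only [circleIntegral, deriv_circleMap]
  apply intervalIntegral.integral_congr
  intro θ _
  dsimp only
  have hw : circleMap 0 1 θ = Complex.exp (θ * Complex.I) := by simp [circleMap]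
  rw [hw]
  have hinv : (Complex.exp (θ * Complex.I))⁻¹ = Complex.exp (-(θ * Complex.I)) :=
    (Complex.exp_neg _).symm
  have hcos : (Complex.exp (θ * Complex.I) + (Complex.exp (θ * Complex.I))⁻¹)/2
      = (Real.cos θ : ℂ) := by
    rw [hinv, Complex.ofReal_cos, Complex.cos]
    ring
  have hz : Complex.exp (θ * Complex.I) ^ (-(k+1) : ℤ)
      = Complex.exp ((-(k+1) : ℤ) * (θ * Complex.I)) := (Complex.exp_int_mul _ _).symm
  rw [hcos, hz, smul_eq_mul]
  rw [show Complex.exp (θ * Complex.I) * Complex.I *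
        (f (Real.cos θ) * Complex.exp ((-(k+1) : ℤ) * (θ * Complex.I)))
      = Complex.I * (f (Real.cos θ) *
        (Complex.exp (θ * Complex.I) * Complex.exp ((-(k+1) : ℤ) * (θ * Complex.I)))) by ring]
  rw [← Complex.exp_add]
  congr 2
  push_cast
  ring


theorem stmt_19 (ρ : ℝ) (hρ : 1 < ρ) (f : ℂ → ℂ)
    (hf : DifferentiableOn ℂ f (closedEllipseInterior ρ))
    (α : ℕ → ℂ)
    (hα : ∀ k, α k = (1 / Real.pi : ℝ) *
        ∫ t in (-1:ℝ)..1,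
          ((1 - t ^ 2 : ℝ) ^ (-(1 / 2 : ℝ)) : ℝ) * f t * (Polynomial.Chebyshev.T ℂ k).eval (t : ℂ))
    (k : ℕ) :
    ‖α k‖ ≤ (2 / ρ ^ k) * sSup ((fun z => ‖f z‖) '' ellipse ρ) := by
  have hπ : (0:ℝ) < π := Real.pi_pos
  have hρ0 : (0:ℝ) < ρ := lt_trans one_pos hρ
  set M := sSup ((fun z => ‖f z‖) '' ellipse ρ) with hM
  have hbdd : BddAbove ((fun z => ‖f z‖) '' ellipse ρ) :=
    ((hcompE' ρ hρ).image_of_continuousOn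
      (continuous_norm.comp_continuousOn (hf.continuousOn.mono (hEsub' ρ hρ)))).bddAbove
  have hMub : ∀ z ∈ ellipse ρ, ‖f z‖ ≤ M := fun z hz => le_csSup hbdd ⟨z, hz, rfl⟩
  have hMnonneg : 0 ≤ M := by
    have hz : ((ρ:ℂ) + (ρ:ℂ)⁻¹)/2 ∈ ellipse ρ :=
      ⟨(ρ:ℂ), by rw [Complex.norm_real, Real.norm_eq_abs, abs_of_pos hρ0], rfl⟩
    exact le_trans (norm_nonneg _) (hMub _ hz)
  have hcf : Continuous fun x : ℝ => f ((Real.cos x : ℂ)) :=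
    hf.continuousOn.comp_continuous
      (Complex.continuous_ofReal.comp Real.continuous_cos) (hcosmem' ρ hρ)
  have hckx : ∀ x : ℝ, Real.cos ((k:ℝ)*(2*π - x)) = Real.cos ((k:ℝ)*x) := by
    intro x
    rw [show (k:ℝ)*(2*π - x) = -((k:ℝ)*x - (k:ℤ)*(2*π)) by push_cast; ring, Real.cos_neg,
      Real.cos_sub_int_mul_two_pi]
  have hskx : ∀ x : ℝ, Real.sin ((k:ℝ)*(2*π - x)) = -Real.sin ((k:ℝ)*x) := by
    intro x
    rw [show (k:ℝ)*(2*π - x) = -((k:ℝ)*x - (k:ℤ)*(2*π)) by push_cast; ring, Real.sin_neg,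
      Real.sin_sub_int_mul_two_pi]
  have hc1 : Continuous fun x : ℝ => ((Real.cos ((k:ℝ) * x) : ℝ) : ℂ) := by continuity
  have hc2 : Continuous fun x : ℝ => ((Real.sin ((k:ℝ) * x) : ℝ) : ℂ) := by continuity
  have hFcont : Continuous fun x : ℝ => f (Real.cos x) * ((Real.cos ((k:ℝ) * x) : ℝ) : ℂ) :=
    hcf.mul hc1
  have hGcont : Continuous fun x : ℝ => f (Real.cos x) * ((Real.sin ((k:ℝ) * x) : ℝ) : ℂ) :=
    hcf.mul hc2
  have hIC2 : (∫ x in (0:ℝ)..(2*π), f (Real.cos x) * (Real.cos (k * x) : ℝ))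
      = 2 * ∫ x in (0:ℝ)..π, f (Real.cos x) * (Real.cos (k * x) : ℝ) := by
    apply half_lemma (fun x : ℝ => f (Real.cos x) * ((Real.cos ((k:ℝ) * x) : ℝ) : ℂ)) hFcont
    intro x
    rw [Real.cos_two_pi_sub, hckx]
  have hIS : (∫ x in (0:ℝ)..(2*π), f (Real.cos x) * (Real.sin (k * x) : ℝ)) = 0 := by
    apply odd_lemma (fun x : ℝ => f (Real.cos x) * ((Real.sin ((k:ℝ) * x) : ℝ) : ℂ))
    intro x
    rw [Real.cos_two_pi_sub, hskx]
    push_cast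
    ring
  have hIE : (∫ x in (0:ℝ)..(2*π), f (Real.cos x) * Complex.exp (-(k*x) * Complex.I))
      = ∫ x in (0:ℝ)..(2*π), f (Real.cos x) * (Real.cos (k * x) : ℝ) := by
    have hpt : ∀ x ∈ Set.uIcc (0:ℝ) (2*π),
        f (Real.cos x) * Complex.exp (-((k:ℂ)*(x:ℂ)) * Complex.I)
          = f (Real.cos x) * (Real.cos (k * x) : ℝ)
            - (f (Real.cos x) * (Real.sin (k * x) : ℝ)) * Complex.I := by
      intro x _
      rw [show (-((k:ℂ)*(x:ℂ)) : ℂ) * Complex.I = ((-((k:ℝ)*x) : ℝ) : ℂ) * Complex.I by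
        push_cast; ring]
      rw [Complex.exp_mul_I]
      push_cast [Complex.ofReal_cos, Complex.ofReal_sin]
      rw [Complex.cos_neg, Complex.sin_neg]
      ring
    have hFint : IntervalIntegrable
        (fun x : ℝ => f (Real.cos x) * ((Real.cos ((k:ℝ) * x) : ℝ) : ℂ)) volume 0 (2*π) :=
      hFcont.intervalIntegrable _ _
    have hGint : IntervalIntegrable
        (fun x : ℝ => (f (Real.cos x) * ((Real.sin ((k:ℝ) * x) : ℝ) : ℂ)) * Complex.I)
        volume 0 (2*π) :=
      (hGcont.mul continuous_const).intervalIntegrable _ _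
    rw [intervalIntegral.integral_congr hpt,
      intervalIntegral.integral_sub hFint hGint,
      intervalIntegral.integral_mul_const, hIS, zero_mul, sub_zero]
  have hbnd : ∀ z ∈ Metric.sphere (0:ℂ) ρ,
      ‖f ((z + z⁻¹)/2) * z ^ (-(k+1) : ℤ)‖ ≤ M * ρ^(-(k+1) : ℤ) := by
    intro z hz
    rw [Metric.mem_sphere, Complex.dist_eq, sub_zero] at hz
    have hmem : (z + z⁻¹)/2 ∈ ellipse ρ := ⟨z, hz, rfl⟩
    rw [norm_mul, norm_zpow, hz]
    exact mul_le_mul_of_nonneg_right (hMub _ hmem) (zpow_nonneg hρ0.le _)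
  have hnorm : ‖∮ z in C(0, ρ), f ((z + z⁻¹)/2) * z ^ (-(k+1) : ℤ)‖
      ≤ 2 * π * ρ * (M * ρ^(-(k+1) : ℤ)) :=
    circleIntegral.norm_integral_le_of_norm_le_const hρ0.le hbnd
  have hICbound : ‖∫ x in (0:ℝ)..(2*π), f (Real.cos x) * (Real.cos (k * x) : ℝ)‖
      ≤ 2*π*ρ*(M * ρ^(-(k+1):ℤ)) := by
    calc ‖∫ x in (0:ℝ)..(2*π), f (Real.cos x) * (Real.cos (k * x) : ℝ)‖
        = ‖Complex.I * ∫ x in (0:ℝ)..(2*π),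
            f (Real.cos x) * Complex.exp (-(k*x) * Complex.I)‖ := by
          rw [hIE, norm_mul, Complex.norm_I, one_mul]
      _ = ‖∮ z in C(0, 1), f ((z + z⁻¹)/2) * z ^ (-(k+1) : ℤ)‖ := by
          rw [circ1 f k]
      _ = ‖∮ z in C(0, ρ), f ((z + z⁻¹)/2) * z ^ (-(k+1) : ℤ)‖ := by
          rw [hkey' ρ hρ f hf k]
      _ ≤ _ := hnorm
  rw [hα k, step1 f k]
  rw [show (∫ x in (0:ℝ)..π, f (Real.cos x) * (Real.cos (k * x) : ℝ))
      = (∫ x in (0:ℝ)..(2*π), f (Real.cos x) * (Real.cos (k * x) : ℝ)) / 2 by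
    rw [hIC2]; ring]
  rw [norm_mul, norm_div, Complex.norm_real, Real.norm_eq_abs, Complex.norm_two]
  rw [abs_of_pos (by positivity : (0:ℝ) < 1/π)]
  have harith : 1/π * (2*π*ρ*(M * ρ^(-(k+1):ℤ)) / 2) = M / ρ^k := by
    rw [show (-(k+1) : ℤ) = -((k+1 : ℕ) : ℤ) by push_cast; ring, zpow_neg, zpow_natCast]
    field_simp
    ring
  calc 1/π * (‖∫ x in (0:ℝ)..(2*π), f (Real.cos x) * (Real.cos (k * x) : ℝ)‖ / 2)
      ≤ 1/π * (2*π*ρ*(M * ρ^(-(k+1):ℤ)) / 2) := by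
        have h2 := hICbound
        gcongr
    _ = M / ρ^k := harith
    _ ≤ 2 / ρ^k * M := by
        rw [div_le_iff₀ (by positivity : (0:ℝ) < ρ^k)] at *
        have : 2 / ρ^k * M * ρ^k = 2 * M := by field_simp
        rw [this]
        linarith
end
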